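/- Let A be a real symmetric M×M matrix and let n : Fin M → ℕ with ∑ᵢ n i = 2m for a natural number m. Then haf(A ⊘ J_n) = ((∏ᵢ (n i)!) / m!) times the coefficient of the monomial ∏ᵢ Xᵢ^{n i} in the multivariate polynomial ((1/2)·∑_{i,j} A i j · Xᵢ·Xⱼ)^m over ℝ in variables X₀,…,X_{M−1}. -/

import Mathlib

open scoped Classical in
/-- The hafnian of a matrix: the sum over all partitions of the index type into
unordered pairs (perfect matchings) of the products of the corresponding entries.
For a symmetric matrix `B` the term `(∑ u ∈ p, ∑ v ∈ p.erase u, B u v) / 2`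
equals `B u v` for the pair `p = {u, v}`. -/
noncomputable def hafnian {ι : Type*} [Fintype ι] [DecidableEq ι]
    (B : Matrix ι ι ℝ) : ℝ :=
  ∑ Mch ∈ Finset.univ.filter
      (fun Mch : Finset (Finset ι) =>
        (∀ p ∈ Mch, p.card = 2) ∧ ∀ x : ι, ∃! p, p ∈ Mch ∧ x ∈ p),
    ∏ p ∈ Mch, (∑ u ∈ p, ∑ v ∈ p.erase u, B u v) / 2

/-- The reduced Kronecker product `A ⊘ J_n`, indexed by `Σ i, Fin (n i)`,
whose `((i,a),(j,b))` entry is `A i j`. -/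
def rkron {ι : Type*} (A : Matrix ι ι ℝ) (n : ι → ℕ) :
    Matrix ((i : ι) × Fin (n i)) ((i : ι) × Fin (n i)) ℝ :=
  fun x y => A x.1 y.1


set_option linter.unusedSectionVars false


open Finset

section Count
variable {α κ : Type*} [Fintype α] [Fintype κ] [DecidableEq α] [DecidableEq κ]
  {β : κ → Type*} [∀ j, Fintype (β j)] [∀ j, DecidableEq (β j)] (v : α → κ)

noncomputable def PhiMap (F : ∀ j, {a // v a = j} ≃ β j) :
    {f : α ≃ (Σ j, β j) // ∀ a, (f a).1 = v a} :=
  ⟨(Equiv.sigmaFiberEquiv v).symm.trans (Equiv.sigmaCongrRight F), by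
    intro a
    simp [Equiv.sigmaFiberEquiv, Equiv.sigmaCongrRight]⟩

lemma PhiMap_bijective : Function.Bijective (PhiMap (β := β) v) := by
  constructor
  · intro F F' h
    funext j
    apply Equiv.ext
    rintro ⟨a, rfl⟩
    have h2 : ∀ a, (PhiMap v F).1 a = (PhiMap v F').1 a := by
      rw [h]; intro a; rfl
    have h3 := h2 a
    simp only [PhiMap, Equiv.trans_apply, Equiv.sigmaCongrRight] at h3
    simp only [Equiv.sigmaFiberEquiv] at h3
    simpa using h3
  · rintro ⟨f, hf⟩
    have key : ∀ (x : α) (j : κ) (h : v x = j), ((f x).1 = j) := fun x j h => (hf x).trans h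
    refine ⟨fun j => Equiv.ofBijective
      (fun x => cast (congrArg β (key x.1 j x.2)) (f x.1).2) ⟨?_, ?_⟩, ?_⟩
    · rintro ⟨a, ha⟩ ⟨a', ha'⟩ hc
      have h1 : (f a).1 = (f a').1 := (key a j ha).trans (key a' j ha').symm
      have h2 : HEq (f a).2 (f a').2 := by
        refine HEq.trans (HEq.trans ?_ (heq_of_eq hc)) ?_
        · exact (cast_heq _ _).symm
        · exact cast_heq _ _
      have : f a = f a' := Sigma.ext h1 h2
      exact Subtype.ext (f.injective this)
    · intro b
      refine ⟨⟨f.symm ⟨j, b⟩, (hf _).symm.trans (congrArg Sigma.fst (f.apply_symm_apply ⟨j, b⟩))⟩, ?_⟩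
      have h1 : f (f.symm ⟨j, b⟩) = ⟨j, b⟩ := f.apply_symm_apply _
      simp only
      have h2 : HEq (f (f.symm ⟨j, b⟩)).2 b := by rw [h1]
      exact eq_of_heq ((cast_heq _ _).trans h2)
    · apply Subtype.ext
      apply Equiv.ext
      intro a
      show (⟨v a, _⟩ : Σ j, β j) = f a
      refine Sigma.ext (hf a).symm ?_
      exact cast_heq _ _

lemma card_fiber_equiv :
    Fintype.card {f : α ≃ (Σ j, β j) // ∀ a, (f a).1 = v a} =
      ∏ j, Fintype.card ({a // v a = j} ≃ β j) := by
  rw [← Fintype.card_of_bijective (PhiMap_bijective v), Fintype.card_pi]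

lemma card_equiv_ite (γ δ : Type*) [Fintype γ] [Fintype δ] [DecidableEq γ] [DecidableEq δ] :
    Fintype.card (γ ≃ δ) =
      if Fintype.card γ = Fintype.card δ then (Fintype.card γ).factorial else 0 := by
  split_ifs with h
  · exact Fintype.card_equiv (Fintype.equivOfCardEq h)
  · rw [Fintype.card_eq_zero_iff]
    exact ⟨fun e => h (Fintype.card_congr e)⟩

end Count


open Finset

section Match
variable {ι : Type*} [Fintype ι] [DecidableEq ι]

def isPM (Mch : Finset (Finset ι)) : Prop :=
  (∀ p ∈ Mch, p.card = 2) ∧ ∀ x : ι, ∃! p, p ∈ Mch ∧ x ∈ p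

lemma pair_nonempty {p : Finset ι} (h : p.card = 2) : p.Nonempty :=
  Finset.card_pos.mp (by omega)

lemma pair_min_max [LinearOrder ι] {p : Finset ι} (h : p.card = 2) :
    p.min' (pair_nonempty h) ≠ p.max' (pair_nonempty h) ∧
      p = {p.min' (pair_nonempty h), p.max' (pair_nonempty h)} := by
  have hne := pair_nonempty h
  have hlt : p.min' hne < p.max' hne := Finset.min'_lt_max'_of_card p (by omega)
  refine ⟨hlt.ne, ?_⟩
  refine (Finset.eq_of_subset_of_card_le ?_ ?_).symm
  · intro x hx
    simp only [Finset.mem_insert, Finset.mem_singleton] at hx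
    rcases hx with rfl | rfl
    · exact p.min'_mem hne
    · exact p.max'_mem hne
  · rw [h, Finset.card_pair hlt.ne]

lemma pair_mem_iff [LinearOrder ι] {p : Finset ι} (h : p.card = 2) (x : ι) :
    x ∈ p ↔ x = p.min' (pair_nonempty h) ∨ x = p.max' (pair_nonempty h) := by
  conv_lhs => rw [(pair_min_max h).2]
  simp

lemma pm_disjoint {Mch : Finset (Finset ι)} (hM : isPM Mch) {p q : Finset ι}
    (hp : p ∈ Mch) (hq : q ∈ Mch) (hx : ∃ x, x ∈ p ∧ x ∈ q) : p = q := by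
  obtain ⟨x, hxp, hxq⟩ := hx
  obtain ⟨r, -, hr⟩ := hM.2 x
  rw [hr p ⟨hp, hxp⟩, hr q ⟨hq, hxq⟩]

lemma pm_card {m : ℕ} (hcard : Fintype.card ι = 2 * m) {Mch : Finset (Finset ι)}
    (hM : isPM Mch) : Mch.card = m := by
  have huniv : Mch.biUnion id = Finset.univ := by
    apply Finset.eq_univ_of_forall
    intro x
    obtain ⟨p, ⟨hp, hxp⟩, -⟩ := hM.2 x
    exact Finset.mem_biUnion.mpr ⟨p, hp, hxp⟩
  have hdisj : ∀ p ∈ Mch, ∀ q ∈ Mch, p ≠ q → Disjoint (id p) (id q) := by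
    intro p hp q hq hpq
    rw [Finset.disjoint_left]
    intro a hap haq
    exact hpq (pm_disjoint hM hp hq ⟨a, hap, haq⟩)
  have := Finset.card_biUnion hdisj
  rw [huniv, Finset.card_univ, hcard] at this
  have h2 : ∑ p ∈ Mch, (id p).card = ∑ p ∈ Mch, 2 :=
    Finset.sum_congr rfl fun p hp => hM.1 p hp
  rw [h2, Finset.sum_const, smul_eq_mul] at this
  omega

def mchOf {m : ℕ} (f : (Fin m × Bool) ≃ ι) : Finset (Finset ι) :=
  Finset.image (fun k => ({f (k, true), f (k, false)} : Finset ι)) Finset.univ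

lemma mchOf_pair_card {m : ℕ} (f : (Fin m × Bool) ≃ ι) (k : Fin m) :
    ({f (k, true), f (k, false)} : Finset ι).card = 2 :=
  Finset.card_pair (fun h => by simpa using f.injective h)

lemma mchOf_isPM {m : ℕ} (f : (Fin m × Bool) ≃ ι) : isPM (mchOf f) := by
  constructor
  · intro p hp
    obtain ⟨k, -, rfl⟩ := Finset.mem_image.mp hp
    exact mchOf_pair_card f k
  · intro x
    obtain ⟨⟨k, b⟩, hk⟩ : ∃ kb, f kb = x := ⟨f.symm x, f.apply_symm_apply x⟩
    refine ⟨{f (k, true), f (k, false)}, ⟨Finset.mem_image.mpr ⟨k, mem_univ _, rfl⟩, ?_⟩, ?_⟩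
    · cases b
      · simp [← hk]
      · simp [← hk]
    · rintro q ⟨hq, hxq⟩
      obtain ⟨k', -, rfl⟩ := Finset.mem_image.mp hq
      simp only [Finset.mem_insert, Finset.mem_singleton] at hxq
      have hkk : k' = k := by
        rcases hxq with h | h
        · rw [← hk] at h; exact (Prod.mk.injEq .. ▸ f.injective h).1.symm
        · rw [← hk] at h; exact (Prod.mk.injEq .. ▸ f.injective h).1.symm
      rw [hkk]

end Match


section Fiber
variable {ι : Type*} [Fintype ι] [DecidableEq ι] [LinearOrder ι] {m : ℕ}
  (hcard : Fintype.card ι = 2 * m) {Mch : Finset (Finset ι)} (hM : isPM Mch)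

variable (Mch) in
noncomputable def rawMap (e : Fin m ≃ {p // p ∈ Mch}) (s : Fin m → Bool)
    (hM : isPM Mch) : Fin m × Bool → ι := fun kb =>
  if kb.2 = s kb.1 then ((e kb.1).1).min' (pair_nonempty (hM.1 _ (e kb.1).2))
  else ((e kb.1).1).max' (pair_nonempty (hM.1 _ (e kb.1).2))

lemma rawMap_pos (e : Fin m ≃ {p // p ∈ Mch}) (s : Fin m → Bool) (k : Fin m) (b : Bool)
    (h : b = s k) :
    rawMap Mch e s hM (k, b) = ((e k).1).min' (pair_nonempty (hM.1 _ (e k).2)) :=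
  if_pos h

lemma rawMap_neg (e : Fin m ≃ {p // p ∈ Mch}) (s : Fin m → Bool) (k : Fin m) (b : Bool)
    (h : ¬ (b = s k)) :
    rawMap Mch e s hM (k, b) = ((e k).1).max' (pair_nonempty (hM.1 _ (e k).2)) :=
  if_neg h

lemma rawMap_mem (e : Fin m ≃ {p // p ∈ Mch}) (s : Fin m → Bool) (kb : Fin m × Bool) :
    rawMap Mch e s hM kb ∈ ((e kb.1) : Finset ι) := by
  unfold rawMap
  split_ifs
  · exact Finset.min'_mem _ _
  · exact Finset.max'_mem _ _

lemma rawMap_bijective (e : Fin m ≃ {p // p ∈ Mch}) (s : Fin m → Bool) :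
    Function.Bijective (rawMap Mch e s hM) := by
  constructor
  · rintro ⟨k, b⟩ ⟨k', b'⟩ hr
    have hmem := rawMap_mem hM e s (k, b)
    have hmem' := rawMap_mem hM e s (k', b')
    rw [hr] at hmem
    have hpq : ((e k) : Finset ι) = ((e k') : Finset ι) :=
      pm_disjoint hM (e k).2 (e k').2 ⟨_, hmem, hmem'⟩
    have hk : k = k' := e.injective (Subtype.ext hpq)
    subst hk
    have hne := (pair_min_max (hM.1 _ (e k).2)).1
    by_cases hbb : b = b'
    · rw [hbb]
    · exfalso
      by_cases h1 : b = s k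
      · have h2 : ¬ (b' = s k) := fun h => hbb (h1.trans h.symm)
        rw [rawMap_pos hM e s k b h1, rawMap_neg hM e s k b' h2] at hr
        exact hne hr
      · have h2 : b' = s k := by
          rcases Bool.eq_false_or_eq_true b with rfl | rfl <;>
            rcases Bool.eq_false_or_eq_true b' with rfl | rfl <;> simp_all
        rw [rawMap_neg hM e s k b h1, rawMap_pos hM e s k b' h2] at hr
        exact hne hr.symm
  · intro x
    obtain ⟨p, ⟨hp, hxp⟩, -⟩ := hM.2 x
    set k := e.symm ⟨p, hp⟩ with hk
    have hek : ((e k) : Finset ι) = p := by rw [hk, e.apply_symm_apply]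
    have hc : p.card = 2 := hM.1 p hp
    rcases (pair_mem_iff hc x).mp hxp with hx | hx
    · refine ⟨(k, s k), ?_⟩
      rw [rawMap_pos hM e s k (s k) rfl, hx]
      simp only [hek]
    · refine ⟨(k, !(s k)), ?_⟩
      rw [rawMap_neg hM e s k (!(s k)) (by simp), hx]
      simp only [hek]

noncomputable def PsiMap (es : (Fin m ≃ {p // p ∈ Mch}) × (Fin m → Bool)) :
    {f : (Fin m × Bool) ≃ ι // mchOf f = Mch} := by
  refine ⟨Equiv.ofBijective _ (rawMap_bijective hM es.1 es.2), ?_⟩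
  obtain ⟨e, s⟩ := es
  have pair_eq : ∀ k : Fin m,
      ({rawMap Mch e s hM (k, true), rawMap Mch e s hM (k, false)} : Finset ι)
        = ((e k) : Finset ι) := by
    intro k
    have hc := hM.1 _ (e k).2
    have hmm := (pair_min_max hc).2
    rcases Bool.eq_false_or_eq_true (s k) with h | h
    · rw [rawMap_pos hM e s k true h.symm, rawMap_neg hM e s k false (by simp [h])]
      exact hmm.symm
    · rw [rawMap_neg hM e s k true (by simp [h]), rawMap_pos hM e s k false h.symm,
        Finset.pair_comm]
      exact hmm.symm
  apply Finset.ext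
  intro q
  unfold mchOf
  simp only [Finset.mem_image, Finset.mem_univ, true_and, Equiv.ofBijective_apply]
  constructor
  · rintro ⟨k, rfl⟩
    rw [pair_eq k]
    exact (e k).2
  · intro hq
    refine ⟨e.symm ⟨q, hq⟩, ?_⟩
    rw [pair_eq, e.apply_symm_apply]

include hcard in
lemma PsiMap_bijective : Function.Bijective (PsiMap (m := m) hM) := by
  constructor
  · rintro ⟨e, s⟩ ⟨e', s'⟩ h
    have hfun : ∀ kb, rawMap Mch e s hM kb = rawMap Mch e' s' hM kb := by
      intro kb
      have := congrArg (fun z => (z : {f : (Fin m × Bool) ≃ ι // mchOf f = Mch}).1 kb) h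
      simpa [PsiMap] using this
    have hee : e = e' := by
      apply Equiv.ext
      intro k
      apply Subtype.ext
      apply pm_disjoint hM (e k).2 (e' k).2
      refine ⟨rawMap Mch e s hM (k, s k), rawMap_mem hM e s (k, s k), ?_⟩
      rw [hfun (k, s k)]
      exact rawMap_mem hM e' s' (k, s k)
    subst hee
    have hss : s = s' := by
      funext k
      by_contra hne
      have h1 := hfun (k, s k)
      have hnemax := (pair_min_max (hM.1 _ (e k).2)).1
      rw [rawMap_pos hM e s k (s k) rfl, rawMap_neg hM e s' k (s k) hne] at h1
      exact hnemax h1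
    rw [hss]
  · rintro ⟨f, hf⟩
    have hmem : ∀ k : Fin m, ({f (k, true), f (k, false)} : Finset ι) ∈ Mch := by
      intro k
      rw [← hf]
      exact Finset.mem_image.mpr ⟨k, Finset.mem_univ _, rfl⟩
    have hcards : Fintype.card {p // p ∈ Mch} = m := by
      rw [Fintype.card_coe, pm_card hcard hM]
    set emap : Fin m → {p // p ∈ Mch} := fun k => ⟨_, hmem k⟩ with hemap
    have hinj : Function.Injective emap := by
      intro k k' hkk
      have hqq : ({f (k, true), f (k, false)} : Finset ι) = {f (k', true), f (k', false)} :=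
        congrArg Subtype.val hkk
      have h1 : f (k, true) ∈ ({f (k, true), f (k, false)} : Finset ι) := by simp
      rw [hqq] at h1
      simp only [Finset.mem_insert, Finset.mem_singleton] at h1
      rcases h1 with h | h
      · exact (Prod.mk.injEq .. ▸ f.injective h).1
      · exact (Prod.mk.injEq .. ▸ f.injective h).1
    have hbij : Function.Bijective emap :=
      (Fintype.bijective_iff_injective_and_card emap).mpr ⟨hinj, by simp [hcards]⟩
    set p : Fin m → Finset ι := fun k => {f (k, true), f (k, false)} with hpdef
    have hc : ∀ k, (p k).card = 2 := fun k => hM.1 _ (hmem k)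
    set e : Fin m ≃ {p // p ∈ Mch} := Equiv.ofBijective emap hbij with he
    set s : Fin m → Bool := fun k =>
      decide (f (k, true) = (p k).min' (pair_nonempty (hc k))) with hs
    have hek : ∀ k, ((e k) : Finset ι) = p k := fun k => rfl
    refine ⟨⟨e, s⟩, ?_⟩
    apply Subtype.ext
    apply Equiv.ext
    rintro ⟨k, b⟩
    show rawMap Mch e s hM (k, b) = f (k, b)
    have hmm := pair_min_max (hc k)
    have htne : f (k, true) ≠ f (k, false) := fun h => by simpa using f.injective h
    have hmin : (p k).min' (pair_nonempty (hc k)) ∈ p k := Finset.min'_mem _ _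
    have hmax : (p k).max' (pair_nonempty (hc k)) ∈ p k := Finset.max'_mem _ _
    simp only [hpdef, Finset.mem_insert, Finset.mem_singleton] at hmin hmax
    have hminEk : ((e k).1).min' (pair_nonempty (hM.1 _ (e k).2))
        = (p k).min' (pair_nonempty (hc k)) := rfl
    have hmaxEk : ((e k).1).max' (pair_nonempty (hM.1 _ (e k).2))
        = (p k).max' (pair_nonempty (hc k)) := rfl
    by_cases hft : f (k, true) = (p k).min' (pair_nonempty (hc k))
    · have hsk : s k = true := decide_eq_true hft
      have hfmax : f (k, false) = (p k).max' (pair_nonempty (hc k)) := by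
        rcases hmax with h | h
        · exact absurd (hft.symm.trans h.symm) hmm.1
        · exact h.symm
      rcases Bool.eq_false_or_eq_true b with rfl | rfl
      · rw [rawMap_pos hM e s k true hsk.symm, hminEk]
        exact hft.symm
      · rw [rawMap_neg hM e s k false (by simp [hsk]), hmaxEk]
        exact hfmax.symm
    · have hsk : s k = false := decide_eq_false hft
      have hftmax : f (k, true) = (p k).max' (pair_nonempty (hc k)) := by
        rcases hmin with h | h
        · exact absurd h.symm hft
        · rcases hmax with h' | h'
          · exact h'.symm
          · exact absurd (h.trans h'.symm) hmm.1
      have hfmin : f (k, false) = (p k).min' (pair_nonempty (hc k)) := by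
        rcases hmin with h | h
        · exact absurd h.symm hft
        · exact h.symm
      rcases Bool.eq_false_or_eq_true b with rfl | rfl
      · rw [rawMap_neg hM e s k true (by simp [hsk]), hmaxEk]
        exact hftmax.symm
      · rw [rawMap_pos hM e s k false hsk.symm, hminEk]
        exact hfmin.symm

include hcard hM in
lemma card_fiber_matching :
    Fintype.card {f : (Fin m × Bool) ≃ ι // mchOf f = Mch} = 2 ^ m * m.factorial := by
  rw [← Fintype.card_of_bijective (PsiMap_bijective hcard hM)]
  rw [Fintype.card_prod]
  have hcards : Fintype.card {p // p ∈ Mch} = m := by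
    rw [Fintype.card_coe, pm_card hcard hM]
  rw [Fintype.card_equiv (Fintype.equivOfCardEq (by simp [hcards]))]
  simp [hcards, mul_comm]

end Fiber
open MvPolynomial
section Poly
variable {σ : Type*} [Fintype σ] [DecidableEq σ]

lemma prod_monomial {R α : Type*} [CommSemiring R] (s : Finset α) (d : α → (σ →₀ ℕ))
    (c : α → R) :
    ∏ k ∈ s, (monomial (d k) (c k) : MvPolynomial σ R)
      = monomial (∑ k ∈ s, d k) (∏ k ∈ s, c k) := by
  induction s using Finset.cons_induction with
  | empty => simp
  | cons a s ha ih => rw [Finset.prod_cons, Finset.sum_cons, Finset.prod_cons, ih, monomial_mul]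

lemma coeff_Q_pow (M m : ℕ) (A : Matrix (Fin M) (Fin M) ℝ) (n' : Fin M →₀ ℕ) :
    MvPolynomial.coeff n'
        ((∑ i : Fin M, ∑ j : Fin M, C (A i j) * X i * X j) ^ m)
      = ∑ g : Fin m → Fin M × Fin M,
          if (∑ k : Fin m, (Finsupp.single (g k).1 1 + Finsupp.single (g k).2 1)) = n'
          then ∏ k : Fin m, A (g k).1 (g k).2 else 0 := by
  have hterm : ∀ i j : Fin M, (C (A i j) * X i * X j : MvPolynomial (Fin M) ℝ)
      = monomial (Finsupp.single i 1 + Finsupp.single j 1) (A i j) := by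
    intro i j
    rw [X, X, mul_assoc, monomial_mul, C_mul_monomial]
    simp
  have hQ : (∑ i : Fin M, ∑ j : Fin M, C (A i j) * X i * X j : MvPolynomial (Fin M) ℝ)
      = ∑ p ∈ (Finset.univ ×ˢ Finset.univ : Finset (Fin M × Fin M)),
          monomial (Finsupp.single p.1 1 + Finsupp.single p.2 1) (A p.1 p.2) := by
    rw [Finset.sum_product]
    exact Finset.sum_congr rfl fun i _ => Finset.sum_congr rfl fun j _ => hterm i j
  have hpow : ((∑ i : Fin M, ∑ j : Fin M, C (A i j) * X i * X j : MvPolynomial (Fin M) ℝ)) ^ m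
      = ∑ g : Fin m → Fin M × Fin M,
          monomial (∑ k : Fin m, (Finsupp.single (g k).1 1 + Finsupp.single (g k).2 1))
            (∏ k : Fin m, A (g k).1 (g k).2) := by
    rw [hQ, ← Fin.prod_const m, Finset.prod_univ_sum]
    rw [show (Fintype.piFinset fun _ : Fin m => (Finset.univ ×ˢ Finset.univ : Finset (Fin M × Fin M))) = Finset.univ from Fintype.piFinset_univ]
    exact Finset.sum_congr rfl fun g _ => prod_monomial _ _ _
  rw [hpow, coeff_sum]
  exact Finset.sum_congr rfl fun g _ => coeff_monomial _ _ _

end Poly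

section Conn
variable {M : ℕ} {m : ℕ} (n : Fin M → ℕ)

lemma card_fiber_w (w : Fin m × Bool → Fin M) :
    Fintype.card {f : (Fin m × Bool) ≃ ((i : Fin M) × Fin (n i)) // ∀ a, (f a).1 = w a}
      = if (∀ i, Fintype.card {a // w a = i} = n i) then ∏ i, (n i).factorial else 0 := by
  rw [card_fiber_equiv]
  split_ifs with h
  · refine Finset.prod_congr rfl fun i _ => ?_
    rw [card_equiv_ite, if_pos (by simp [h i]), h i]
  · push_neg at h
    obtain ⟨i0, hi0⟩ := h
    refine Finset.prod_eq_zero (Finset.mem_univ i0) ?_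
    rw [card_equiv_ite, if_neg (by simpa using hi0)]

def vmap (g : Fin m → Fin M × Fin M) : Fin m × Bool → Fin M :=
  fun kb => cond kb.2 (g kb.1).1 (g kb.1).2

lemma vmap_bijective : Function.Bijective (vmap (m := m) (M := M)) := by
  refine Function.bijective_iff_has_inverse.mpr
    ⟨fun w k => (w (k, true), w (k, false)), fun g => ?_, fun w => ?_⟩
  · funext k; rfl
  · funext kb
    obtain ⟨k, b⟩ := kb
    cases b <;> rfl

lemma cond_iff (g : Fin m → Fin M × Fin M) :
    (∑ k : Fin m, (Finsupp.single (g k).1 1 + Finsupp.single (g k).2 1))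
        = Finsupp.equivFunOnFinite.symm n
      ↔ ∀ i, Fintype.card {a : Fin m × Bool // vmap g a = i} = n i := by
  rw [Finsupp.ext_iff]
  refine forall_congr' fun i => ?_
  have h3 : Fintype.card {a : Fin m × Bool // vmap g a = i}
      = ∑ k : Fin m, ((if (g k).1 = i then 1 else 0) + (if (g k).2 = i then 1 else 0)) := by
    rw [Fintype.card_subtype, Finset.card_filter, Fintype.sum_prod_type]
    refine Finset.sum_congr rfl fun k _ => ?_
    rw [Fintype.sum_bool]
    rfl
  rw [h3]
  simp only [Finsupp.finset_sum_apply, Finsupp.add_apply, Finsupp.single_apply,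
    Finsupp.coe_equivFunOnFinite_symm]

lemma conn (A : Matrix (Fin M) (Fin M) ℝ) :
    ∑ f : (Fin m × Bool) ≃ ((i : Fin M) × Fin (n i)),
        ∏ k : Fin m, A (f (k, true)).1 (f (k, false)).1
      = (∏ i, (n i).factorial : ℕ) *
          ∑ g : Fin m → Fin M × Fin M,
            if (∑ k : Fin m, (Finsupp.single (g k).1 1 + Finsupp.single (g k).2 1))
                = Finsupp.equivFunOnFinite.symm n
            then ∏ k : Fin m, A (g k).1 (g k).2 else 0 := by
  classical
  rw [← Fintype.sum_fiberwise (fun (f : (Fin m × Bool) ≃ ((i : Fin M) × Fin (n i)))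
      (a : Fin m × Bool) => (f a).1)
      (fun f => ∏ k : Fin m, A (f (k, true)).1 (f (k, false)).1)]
  have step1 : ∀ w : Fin m × Bool → Fin M,
      (∑ f : {f : (Fin m × Bool) ≃ ((i : Fin M) × Fin (n i)) // (fun a => (f a).1) = w},
          ∏ k : Fin m, A (f.1 (k, true)).1 (f.1 (k, false)).1)
        = (if (∀ i, Fintype.card {a // w a = i} = n i) then (∏ i, (n i).factorial : ℕ) else 0)
            * ∏ k : Fin m, A (w (k, true)) (w (k, false)) := by
    intro w
    have hconst : ∀ f : {f : (Fin m × Bool) ≃ ((i : Fin M) × Fin (n i)) // (fun a => (f a).1) = w},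
        (∏ k : Fin m, A (f.1 (k, true)).1 (f.1 (k, false)).1)
          = ∏ k : Fin m, A (w (k, true)) (w (k, false)) := by
      rintro ⟨f, hf⟩
      refine Finset.prod_congr rfl fun k _ => ?_
      rw [← congrFun hf (k, true), ← congrFun hf (k, false)]
    rw [Finset.sum_congr rfl fun f _ => hconst f, Finset.sum_const, Finset.card_univ]
    have hcards : Fintype.card {f : (Fin m × Bool) ≃ ((i : Fin M) × Fin (n i)) // (fun a => (f a).1) = w}
        = if (∀ i, Fintype.card {a // w a = i} = n i) then ∏ i, (n i).factorial else 0 := by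
      rw [Fintype.card_congr (Equiv.subtypeEquivRight (fun f => _root_.funext_iff))]
      exact card_fiber_w n w
    rw [hcards]
    split_ifs <;> simp
  rw [Finset.sum_congr rfl fun w _ => step1 w]
  rw [← Fintype.sum_bijective (vmap (m := m) (M := M)) vmap_bijective _ _ (fun g => rfl)]
  rw [Finset.mul_sum]
  refine Finset.sum_congr rfl fun g _ => ?_
  have hv1 : ∀ k, vmap g (k, true) = (g k).1 := fun k => rfl
  have hv2 : ∀ k, vmap g (k, false) = (g k).2 := fun k => rfl
  simp only [hv1, hv2]
  by_cases hc : (∑ k : Fin m, (Finsupp.single (g k).1 1 + Finsupp.single (g k).2 1))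
      = Finsupp.equivFunOnFinite.symm n
  · rw [if_pos ((cond_iff n g).mp hc), if_pos hc]
  · rw [if_neg (fun h => hc ((cond_iff n g).mpr h)), if_neg hc]
    simp

end Conn

section Haf
open scoped Classical
variable {ι : Type*} [Fintype ι] [DecidableEq ι] [LinearOrder ι] {m : ℕ}

lemma prod_val (B : Matrix ι ι ℝ) (hB : ∀ x y, B x y = B y x) (f : (Fin m × Bool) ≃ ι) :
    ∏ p ∈ mchOf f, (∑ u ∈ p, ∑ v ∈ p.erase u, B u v) / 2
      = ∏ k : Fin m, B (f (k, true)) (f (k, false)) := by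
  unfold mchOf
  rw [Finset.prod_image]
  · refine Finset.prod_congr rfl fun k _ => ?_
    set u := f (k, true) with hu
    set v := f (k, false) with hv
    have hne : u ≠ v := fun h => by simpa using f.injective h
    have h1 : ({u, v} : Finset ι).erase u = {v} := Finset.erase_insert (by simp [hne])
    have h2 : ({u, v} : Finset ι).erase v = {u} := by
      rw [Finset.pair_comm]
      exact Finset.erase_insert (by simp [hne.symm])
    rw [Finset.sum_pair hne, h1, h2, Finset.sum_singleton, Finset.sum_singleton, hB v u]
    ring
  · intro k _ k' _ hkk
    have h1 : f (k, true) ∈ ({f (k, true), f (k, false)} : Finset ι) := by simp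
    beta_reduce at hkk
    rw [hkk] at h1
    simp only [Finset.mem_insert, Finset.mem_singleton] at h1
    rcases h1 with h | h
    · exact (Prod.mk.injEq .. ▸ f.injective h).1
    · exact (Prod.mk.injEq .. ▸ f.injective h).1

lemma haf_sum (hcard : Fintype.card ι = 2 * m) (B : Matrix ι ι ℝ)
    (hB : ∀ x y, B x y = B y x) :
    ((2 : ℝ) ^ m * m.factorial) * hafnian B
      = ∑ f : (Fin m × Bool) ≃ ι, ∏ k : Fin m, B (f (k, true)) (f (k, false)) := by
  rw [← Fintype.sum_fiberwise (mchOf (m := m) (ι := ι))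
    (fun f => ∏ k : Fin m, B (f (k, true)) (f (k, false)))]
  have inner : ∀ Mch : Finset (Finset ι),
      (∑ f : {f : (Fin m × Bool) ≃ ι // mchOf f = Mch},
          ∏ k : Fin m, B (f.1 (k, true)) (f.1 (k, false)))
        = if isPM Mch then
            ((2 : ℝ) ^ m * m.factorial) * ∏ p ∈ Mch, (∑ u ∈ p, ∑ v ∈ p.erase u, B u v) / 2
          else 0 := by
    intro Mch
    split_ifs with h
    · have hconst : ∀ f : {f : (Fin m × Bool) ≃ ι // mchOf f = Mch},
          (∏ k : Fin m, B (f.1 (k, true)) (f.1 (k, false)))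
            = ∏ p ∈ Mch, (∑ u ∈ p, ∑ v ∈ p.erase u, B u v) / 2 := by
        rintro ⟨f, hf⟩
        rw [← prod_val B hB f, hf]
      rw [Finset.sum_congr rfl fun f _ => hconst f, Finset.sum_const, Finset.card_univ,
        card_fiber_matching hcard h, nsmul_eq_mul]
      push_cast
      ring
    · haveI : IsEmpty {f : (Fin m × Bool) ≃ ι // mchOf f = Mch} :=
        ⟨fun f => h (f.2 ▸ mchOf_isPM f.1)⟩
      simp
  rw [Finset.sum_congr rfl fun Mch _ => inner Mch, ← Finset.sum_filter, ← Finset.mul_sum]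
  congr 1
  unfold hafnian isPM
  exact Finset.sum_congr (by ext Mch; simp) (fun _ _ => rfl)

end Haf

open MvPolynomial in
theorem stmt_5 (M m : ℕ) (A : Matrix (Fin M) (Fin M) ℝ) (hA : A.IsSymm)
    (n : Fin M → ℕ) (hn : ∑ i, n i = 2 * m) :
    hafnian (rkron A n) =
      ((∏ i, Nat.factorial (n i) : ℕ) : ℝ) / (Nat.factorial m : ℝ) *
        MvPolynomial.coeff (Finsupp.equivFunOnFinite.symm n)
          ((MvPolynomial.C (1 / 2 : ℝ) *
              ∑ i : Fin M, ∑ j : Fin M,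
                MvPolynomial.C (A i j) * MvPolynomial.X i * MvPolynomial.X j) ^ m) := by
  classical
  letI : LinearOrder ((i : Fin M) × Fin (n i)) :=
    LinearOrder.lift' (Fintype.equivFin ((i : Fin M) × Fin (n i)))
      (Fintype.equivFin ((i : Fin M) × Fin (n i))).injective
  have hcard : Fintype.card ((i : Fin M) × Fin (n i)) = 2 * m := by
    simp [Fintype.card_sigma, hn]
  have hB : ∀ x y : (i : Fin M) × Fin (n i), rkron A n x y = rkron A n y x := by
    intro x y
    show A x.1 y.1 = A y.1 x.1
    exact (hA.apply x.1 y.1).symm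
  have H := haf_sum hcard (rkron A n) hB
  have Cs := conn n (m := m) A
  have hBA : (∑ f : (Fin m × Bool) ≃ ((i : Fin M) × Fin (n i)),
      ∏ k : Fin m, rkron A n (f (k, true)) (f (k, false)))
      = ∑ f : (Fin m × Bool) ≃ ((i : Fin M) × Fin (n i)),
          ∏ k : Fin m, A (f (k, true)).1 (f (k, false)).1 := rfl
  have P := coeff_Q_pow M m A (Finsupp.equivFunOnFinite.symm n)
  rw [hBA, Cs, ← P] at H
  have h2 : ((2 : ℝ) ^ m * m.factorial) ≠ 0 := by positivity
  rw [mul_pow, ← map_pow (C : ℝ →+* MvPolynomial (Fin M) ℝ), coeff_C_mul]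
  have hx : hafnian (rkron A n)
      = ((∏ i, (n i).factorial : ℕ) : ℝ)
          * MvPolynomial.coeff (Finsupp.equivFunOnFinite.symm n)
            ((∑ i : Fin M, ∑ j : Fin M, C (A i j) * X i * X j) ^ m)
            / ((2 : ℝ) ^ m * m.factorial) := by
    rw [eq_div_iff h2, mul_comm, H]
  rw [hx]
  have hm : (m.factorial : ℝ) ≠ 0 := by positivity
  field_simp
  ring_nf
  simp
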